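/- Let F : A → B be a morphism of bottom-split augmented simplicial objects in a category with pullbacks (simplicial objects equipped with augmentation A₋₁ ← A₀ and extra bottom degeneracies s₋₁ : Aₙ → Aₙ₊₁ splitting the bottom face maps, including a section s₋₁ : A₋₁ → A₀ of the augmentation). If F is cartesian on all top face maps d_⊤ and on all inner face maps (i.e., F is a left fibration on underlying simplicial objects), then the square with horizontal arrows the augmentation maps A₀ → A₋₁ and B₀ → B₋₁ and vertical arrows F₀ and F₋₁ is a pullback, and moreover F is cartesian on all face and degeneracy maps. -/

import Mathlib

open CategoryTheory Simplicial Opposite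

/-- A bottom-split augmented simplicial object: a simplicial object `X` with an augmentation
`q : X₀ → X₋₁`, extra bottom degeneracies `s₋₁ = sm n : Xₙ → Xₙ₊₁` splitting the bottom face
maps, and a section `smA : X₋₁ → X₀` of the augmentation, satisfying the split-simplicial
identities. -/
structure BotSplitAug (C : Type*) [Category C] where
  X : SimplicialObject C
  pt : C
  q : X _⦋0⦌ ⟶ pt
  sm : ∀ n : ℕ, X _⦋n⦌ ⟶ X _⦋n+1⦌
  smA : pt ⟶ X _⦋0⦌
  sm_d0 : ∀ n : ℕ, sm n ≫ X.δ (0 : Fin (n + 2)) = 𝟙 _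
  sm_d : ∀ (n : ℕ) (i : Fin (n + 2)), sm (n+1) ≫ X.δ i.succ = X.δ i ≫ sm n
  sm_s : ∀ (n : ℕ) (i : Fin (n + 1)), sm n ≫ X.σ i.succ = X.σ i ≫ sm (n+1)
  smA_q : smA ≫ q = 𝟙 pt
  q_coeq : X.δ (0 : Fin 2) ≫ q = X.δ (1 : Fin 2) ≫ q
  sm_d1 : sm 0 ≫ X.δ (1 : Fin 2) = q ≫ smA
  smA_s : smA ≫ X.σ (0 : Fin 1) = smA ≫ sm 0

/-- Auxiliary: a commutative square admitting a suitable "splitting" through a pullback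
square is itself a pullback square. -/
lemma split_square_isPullback {C : Type*} [Category C]
    {X₀ X₁ X₂ Y₀ Y₁ Y₂ : C}
    (d : X₁ ⟶ X₀) (d' : Y₁ ⟶ Y₀)
    (D : X₂ ⟶ X₁) (D' : Y₂ ⟶ Y₁) (E : X₂ ⟶ X₁) (E' : Y₂ ⟶ Y₁)
    (s : X₀ ⟶ X₁) (s' : Y₀ ⟶ Y₁) (S : X₁ ⟶ X₂) (S' : Y₁ ⟶ Y₂)
    (f₀ : X₀ ⟶ Y₀) (f₁ : X₁ ⟶ Y₁) (f₂ : X₂ ⟶ Y₂)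
    (hT : IsPullback D f₂ f₁ D')
    (hnat : d ≫ f₀ = f₁ ≫ d')
    (hE : E ≫ f₁ = f₂ ≫ E')
    (hsd : s ≫ d = 𝟙 X₀)
    (hSE : S ≫ E = 𝟙 X₁) (hS'E' : S' ≫ E' = 𝟙 Y₁)
    (hSD : S ≫ D = d ≫ s) (hS'D' : S' ≫ D' = d' ≫ s')
    (hED : E ≫ d = D ≫ d)
    (hsf : s ≫ f₁ = f₀ ≫ s')
    (hSf : S ≫ f₂ = f₁ ≫ S') :
    IsPullback d f₁ f₀ d' := by
  have key : ∀ (T : C) (u : T ⟶ X₀) (v : T ⟶ Y₁) (hw : u ≫ f₀ = v ≫ d'),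
      (u ≫ s) ≫ f₁ = (v ≫ S') ≫ D' := by
    intro T u v hw
    rw [Category.assoc, Category.assoc, hsf, hS'D', ← Category.assoc, hw, Category.assoc]
  apply IsPullback.of_isLimit
    (Limits.PullbackCone.IsLimit.mk hnat
      (fun c => hT.lift (c.fst ≫ s) (c.snd ≫ S') (key _ _ _ c.condition) ≫ E) ?_ ?_ ?_)
  · intro c
    rw [Category.assoc, hED, ← Category.assoc, hT.lift_fst, Category.assoc, hsd,
      Category.comp_id]
  · intro c
    rw [Category.assoc, hE, ← Category.assoc, hT.lift_snd, Category.assoc, hS'E',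
      Category.comp_id]
  · intro c m hm1 hm2
    have : m ≫ S = hT.lift (c.fst ≫ s) (c.snd ≫ S') (key _ _ _ c.condition) := by
      apply hT.hom_ext
      · rw [Category.assoc, hSD, ← Category.assoc, hm1, hT.lift_fst]
      · rw [Category.assoc, hSf, ← Category.assoc, hm2, hT.lift_snd]
    calc m = m ≫ S ≫ E := by rw [hSE, Category.comp_id]
    _ = _ := by rw [← Category.assoc, this]

/-- Let `F : A → B` be a morphism of bottom-split augmented simplicial objects
in a category with pullbacks.  If `F` is a left fibration on underlying simplicial objects
(cartesian on all top and inner face maps, i.e. all `δ i` with `i ≠ 0`), then the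
augmentation square is a pullback, and moreover `F` is cartesian on all face and all
degeneracy maps. -/
theorem leftFibration_of_botSplitAug_is_cartesian {C : Type*} [Category C]
    [Limits.HasPullbacks C] (A B : BotSplitAug C)
    (F : A.X ⟶ B.X) (Fpt : A.pt ⟶ B.pt)
    -- `F` is a morphism of bottom-split augmented simplicial objects:
    (hq : F.app (op (SimplexCategory.mk 0)) ≫ B.q = A.q ≫ Fpt)
    (hsm : ∀ n : ℕ, A.sm n ≫ F.app (op (SimplexCategory.mk (n+1))) =
      F.app (op (SimplexCategory.mk n)) ≫ B.sm n)
    (hsmA : A.smA ≫ F.app (op (SimplexCategory.mk 0)) = Fpt ≫ B.smA)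
    -- `F` is a left fibration:
    (hleft : ∀ (n : ℕ) (i : Fin (n + 2)), i ≠ 0 →
      IsPullback (A.X.δ i) (F.app (op (SimplexCategory.mk (n+1))))
        (F.app (op (SimplexCategory.mk n))) (B.X.δ i)) :
    IsPullback A.q (F.app (op (SimplexCategory.mk 0))) Fpt B.q ∧
    (∀ (n : ℕ) (i : Fin (n + 2)),
      IsPullback (A.X.δ i) (F.app (op (SimplexCategory.mk (n+1))))
        (F.app (op (SimplexCategory.mk n))) (B.X.δ i)) ∧
    (∀ (n : ℕ) (i : Fin (n + 1)),
      IsPullback (A.X.σ i) (F.app (op (SimplexCategory.mk n)))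
        (F.app (op (SimplexCategory.mk (n+1)))) (B.X.σ i)) := by
  -- All face maps are cartesian:
  have hδ : ∀ (n : ℕ) (i : Fin (n + 2)),
      IsPullback (A.X.δ i) (F.app (op (SimplexCategory.mk (n+1))))
        (F.app (op (SimplexCategory.mk n))) (B.X.δ i) := by
    intro n i
    by_cases hi : i = 0
    · subst hi
      refine split_square_isPullback (A.X.δ (0 : Fin (n+2))) (B.X.δ (0 : Fin (n+2)))
        (A.X.δ (1 : Fin (n+3))) (B.X.δ (1 : Fin (n+3)))
        (A.X.δ (0 : Fin (n+3))) (B.X.δ (0 : Fin (n+3)))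
        (A.sm n) (B.sm n) (A.sm (n+1)) (B.sm (n+1)) _ _ _
        (hleft (n+1) 1 one_ne_zero)
        (SimplicialObject.δ_naturality F _) (SimplicialObject.δ_naturality F _)
        (A.sm_d0 n) (A.sm_d0 (n+1)) (B.sm_d0 (n+1)) ?_ ?_ ?_ (hsm n) (hsm (n+1))
      · simpa using A.sm_d n 0
      · simpa using B.sm_d n 0
      · simpa using (A.X.δ_comp_δ (i := 0) (j := 0) le_rfl).symm
    · exact hleft n i hi
  refine ⟨?_, hδ, ?_⟩
  · -- the augmentation square
    refine split_square_isPullback A.q B.q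
      (A.X.δ (1 : Fin 2)) (B.X.δ (1 : Fin 2)) (A.X.δ (0 : Fin 2)) (B.X.δ (0 : Fin 2))
      A.smA B.smA (A.sm 0) (B.sm 0) _ _ _
      (hleft 0 1 one_ne_zero) hq.symm
      (SimplicialObject.δ_naturality F _)
      A.smA_q (A.sm_d0 0) (B.sm_d0 0) A.sm_d1 B.sm_d1 A.q_coeq hsmA (hsm 0)
  · -- degeneracies
    intro n i
    refine IsPullback.of_right ?_ (SimplicialObject.σ_naturality F i) (hδ n i.succ)
    rw [SimplicialObject.δ_comp_σ_succ, SimplicialObject.δ_comp_σ_succ]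
    exact IsPullback.of_id_fst
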